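/- Let τ > 0, γ ∈ [0,1), and suppose y : ℝ₊ → ℝ is differentiable and satisfies ẏ_t = −τ y_t − (1−γ) v_t for all t > 0, where v : ℝ₊ → ℝ is continuous, nonnegative, and nonincreasing, and y_t ≥ 0 for all t ≥ 0. Then for all t > 0, v_t ≤ τ y_0 / ((1−γ)(e^{τt} − 1)). -/

import Mathlib

open Real Set

/-- ODE comparison for exponential convergence: if `y ≥ 0` on `[0,∞)` is
continuous there, differentiable on `(0,∞)` with `ẏ_t = −τ y_t − (1−γ) v_t`, where `v` is
continuous on `[0,∞)`, nonnegative and nonincreasing, then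
`v_t ≤ τ y_0 / ((1−γ)(e^{τt} − 1))` for all `t > 0`. -/
theorem ode_comparison_exponential_convergence
    (τ γ : ℝ) (hτ : 0 < τ) (hγ0 : 0 ≤ γ) (hγ1 : γ < 1)
    (y v : ℝ → ℝ)
    (hy_nonneg : ∀ t ≥ (0 : ℝ), 0 ≤ y t)
    (hy_cont : ContinuousOn y (Ici 0))
    (hv_cont : ContinuousOn v (Ici 0))
    (hv_nonneg : ∀ t ≥ (0 : ℝ), 0 ≤ v t)
    (hv_mono : ∀ s t : ℝ, 0 ≤ s → s ≤ t → v t ≤ v s)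
    (hy_deriv : ∀ t > (0 : ℝ), HasDerivAt y (-τ * y t - (1 - γ) * v t) t) :
    ∀ t > (0 : ℝ), v t ≤ τ * y 0 / ((1 - γ) * (Real.exp (τ * t) - 1)) := by
  intro t ht
  have hg : 0 < 1 - γ := by linarith
  set h : ℝ → ℝ := fun r => Real.exp (τ * r) * y r
      + (1 - γ) * v t * ((Real.exp (τ * r) - 1) / τ) with hh
  have hd : ∀ r ∈ Ioo (0 : ℝ) t,
      HasDerivAt h ((1 - γ) * Real.exp (τ * r) * (v t - v r)) r := by
    intro r hr
    have he : HasDerivAt (fun s => Real.exp (τ * s)) (Real.exp (τ * r) * τ) r := by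
      simpa using ((hasDerivAt_id r).const_mul τ).exp
    have h1 := he.mul (hy_deriv r hr.1)
    have h2 := ((he.sub_const 1).div_const τ).const_mul ((1 - γ) * v t)
    have := h1.add h2
    refine this.congr_deriv ?_
    rw [mul_div_cancel_right₀ _ hτ.ne']
    ring
  have hcont : ContinuousOn h (Icc 0 t) := by
    apply ContinuousOn.add
    · exact ((Real.continuous_exp.comp (continuous_const.mul continuous_id)).continuousOn).mul
        (hy_cont.mono Icc_subset_Ici_self)
    · exact continuousOn_const.mul
        ((((Real.continuous_exp.comp (continuous_const.mul continuous_id)).sub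
          continuous_const).div_const τ).continuousOn)
  have hanti : AntitoneOn h (Icc 0 t) := by
    apply antitoneOn_of_deriv_nonpos (convex_Icc 0 t) hcont
    · intro r hr
      rw [interior_Icc] at hr
      exact (hd r hr).differentiableAt.differentiableWithinAt
    · intro r hr
      rw [interior_Icc] at hr
      rw [(hd r hr).deriv]
      have hvr : v t ≤ v r := hv_mono r t hr.1.le hr.2.le
      have : (0:ℝ) < Real.exp (τ * r) := Real.exp_pos _
      nlinarith [mul_nonneg (mul_nonneg hg.le this.le) (sub_nonneg.2 hvr)]
  have hle : h t ≤ h 0 :=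
    hanti (left_mem_Icc.2 ht.le) (right_mem_Icc.2 ht.le) ht.le
  have h0 : h 0 = y 0 := by simp [hh]
  have hyt : 0 ≤ Real.exp (τ * t) * y t :=
    mul_nonneg (Real.exp_pos _).le (hy_nonneg t ht.le)
  have hexp : 0 < Real.exp (τ * t) - 1 := by
    have : (1:ℝ) < Real.exp (τ * t) := by
      calc (1:ℝ) = Real.exp 0 := Real.exp_zero.symm
        _ < Real.exp (τ * t) := Real.exp_lt_exp.2 (by positivity)
    linarith
  rw [le_div_iff₀ (by positivity)]
  have key : (1 - γ) * v t * ((Real.exp (τ * t) - 1) / τ) ≤ y 0 := by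
    rw [h0] at hle
    simp only [hh] at hle
    linarith
  have := mul_le_mul_of_nonneg_left key hτ.le
  calc v t * ((1 - γ) * (Real.exp (τ * t) - 1))
      = τ * ((1 - γ) * v t * ((Real.exp (τ * t) - 1) / τ)) := by field_simp
    _ ≤ τ * y 0 := this
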